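/- Let $C \in \mathbb{R}^{m\times n}$ and $\lambda_A, \lambda_B > 0$. Then $\min \{\frac{\lambda_A}{2}\|A\|_F^2 + \frac{\lambda_B}{2}\|B\|_F^2 : A \in \mathbb{R}^{m\times k},\ B \in \mathbb{R}^{k\times n},\ AB = C\} = \sqrt{\lambda_A \lambda_B}\, \|C\|_*$, provided $k \ge \mathrm{rank}(C)$, where $\|C\|_*$ denotes the nuclear norm (sum of singular values) of $C$. -/

import Mathlib

open Matrix BigOperators

noncomputable def frobSq {m n : ℕ} (A : Matrix (Fin m) (Fin n) ℝ) : ℝ :=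
  ∑ i, ∑ j, (A i j)^2

noncomputable def singVals {m n : ℕ} (A : Matrix (Fin m) (Fin n) ℝ) : Fin n → ℝ :=
  fun i => Real.sqrt ((Matrix.posSemidef_conjTranspose_mul_self A).isHermitian.eigenvalues i)

noncomputable def nuclearNorm {m n : ℕ} (A : Matrix (Fin m) (Fin n) ℝ) : ℝ :=
  ∑ i, singVals A i

noncomputable def relu : ℝ → ℝ := fun t => max t 0

lemma frobSq_eq_trace {m n : ℕ} (A : Matrix (Fin m) (Fin n) ℝ) :
    frobSq A = (Aᵀ * A).trace := by
  simp [frobSq, Matrix.trace, Matrix.diag, Matrix.mul_apply, sq]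
  rw [Finset.sum_comm]

lemma frobSq_eq_trace' {m n : ℕ} (A : Matrix (Fin m) (Fin n) ℝ) :
    frobSq A = (A * Aᵀ).trace := by
  simp [frobSq, Matrix.trace, Matrix.diag, Matrix.mul_apply, sq]

lemma frobSq_nonneg {m n : ℕ} (A : Matrix (Fin m) (Fin n) ℝ) : 0 ≤ frobSq A :=
  Finset.sum_nonneg fun _ _ => Finset.sum_nonneg fun _ _ => sq_nonneg _

lemma trace_nonneg_of_posSemidef {n : ℕ} {M : Matrix (Fin n) (Fin n) ℝ}
    (hM : M.PosSemidef) : 0 ≤ M.trace := by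
  apply Finset.sum_nonneg
  intro i _
  have := (posSemidef_iff_dotProduct_mulVec.mp hM).2 (Pi.single i 1)
  simpa using this

lemma trace_mul_proj_le {q : ℕ} {X P : Matrix (Fin q) (Fin q) ℝ}
    (hX : X.PosSemidef) (hP : Pᵀ = P) (hP2 : P * P = P) :
    (X * P).trace ≤ X.trace := by
  have hQ : ((1 - P) : Matrix (Fin q) (Fin q) ℝ)ᵀ = 1 - P := by
    simp [Matrix.transpose_sub, hP]
  have hQ2 : ((1 - P) : Matrix (Fin q) (Fin q) ℝ) * (1 - P) = 1 - P := by
    simp [Matrix.mul_sub, Matrix.sub_mul, hP2]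
  have key : 0 ≤ (X * (1 - P)).trace := by
    have e1 : (X * (1 - P)).trace = ((1 - P) * (X * (1 - P))).trace := by
      conv_lhs => rw [← hQ2, ← Matrix.mul_assoc]
      rw [Matrix.trace_mul_comm]
    rw [e1, ← Matrix.mul_assoc]
    have hpsd : (((1 - P) : Matrix (Fin q) (Fin q) ℝ) * X * (1 - P)).PosSemidef := by
      have := hX.mul_mul_conjTranspose_same ((1 - P) : Matrix (Fin q) (Fin q) ℝ)
      rwa [Matrix.conjTranspose_eq_transpose_of_trivial, hQ] at this
    exact trace_nonneg_of_posSemidef hpsd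
  have : (X * (1 - P)).trace = X.trace - (X * P).trace := by
    simp [Matrix.mul_sub, Matrix.trace_sub]
  linarith [key, this ▸ key]

lemma trace_transpose_mul_le {m n : ℕ} (X Y : Matrix (Fin m) (Fin n) ℝ) :
    (Xᵀ * Y).trace ≤ Real.sqrt (frobSq X) * Real.sqrt (frobSq Y) := by
  have h1 : (Xᵀ * Y).trace = ∑ p : Fin m × Fin n, X p.1 p.2 * Y p.1 p.2 := by
    rw [Fintype.sum_prod_type]
    simp [Matrix.trace, Matrix.diag, Matrix.mul_apply]
    rw [Finset.sum_comm]
  have h2 : frobSq X = ∑ p : Fin m × Fin n, (X p.1 p.2)^2 := by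
    rw [Fintype.sum_prod_type]; rfl
  have h3 : frobSq Y = ∑ p : Fin m × Fin n, (Y p.1 p.2)^2 := by
    rw [Fintype.sum_prod_type]; rfl
  rw [h1, h2, h3]
  exact Real.sum_mul_le_sqrt_mul_sqrt Finset.univ _ _

lemma frobSq_smul {m n : ℕ} (c : ℝ) (A : Matrix (Fin m) (Fin n) ℝ) :
    frobSq (c • A) = c^2 * frobSq A := by
  simp [frobSq, Finset.mul_sum, mul_pow]

lemma svd_exists {m n : ℕ} (C : Matrix (Fin m) (Fin n) ℝ) :
    ∃ (U : Matrix (Fin m) (Fin n) ℝ) (V : Matrix (Fin n) (Fin n) ℝ),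
      Vᵀ * V = 1 ∧ V * Vᵀ = 1 ∧
      Uᵀ * U = Matrix.diagonal (fun i => if singVals C i = 0 then (0:ℝ) else 1) ∧
      U * Matrix.diagonal (fun i => if singVals C i = 0 then (0:ℝ) else 1) = U ∧
      C = U * Matrix.diagonal (singVals C) * Vᵀ ∧
      C.rank = (Finset.univ.filter (fun i => singVals C i ≠ 0)).card := by
  have hPSD := Matrix.posSemidef_conjTranspose_mul_self C
  set hH := hPSD.isHermitian with hHdef
  set μ : Fin n → ℝ := hH.eigenvalues with hμdef
  have hμ0 : ∀ i, 0 ≤ μ i := fun i => hPSD.eigenvalues_nonneg i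
  have hσdef : ∀ i, singVals C i = Real.sqrt (μ i) := fun i => rfl
  set σ : Fin n → ℝ := singVals C with hsig
  have hσsq : ∀ i, σ i ^ 2 = μ i := fun i => by
    rw [hσdef i, Real.sq_sqrt (hμ0 i)]
  have hσzero : ∀ i, σ i = 0 ↔ μ i = 0 := fun i => by
    rw [hσdef i]
    constructor
    · intro h; have := Real.sqrt_eq_zero (hμ0 i) |>.1 h; exact this
    · intro h; rw [h, Real.sqrt_zero]
  set v : Fin n → (Fin n → ℝ) := fun i => ⇑(hH.eigenvectorBasis i) with hvdef
  have hVmul : ∀ i, (Cᴴ * C) *ᵥ v i = μ i • v i := fun i => hH.mulVec_eigenvectorBasis i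
  have horth : ∀ i j, v i ⬝ᵥ v j = if i = j then 1 else 0 := by
    intro i j
    have h := hH.eigenvectorBasis.orthonormal
    rw [orthonormal_iff_ite] at h
    have := h i j
    simpa [PiLp.inner_apply, RCLike.inner_apply, dotProduct, conj_trivial, hvdef, mul_comm] using this
  have hCdot : ∀ i j, (C *ᵥ v i) ⬝ᵥ (C *ᵥ v j) = if i = j then μ i else 0 := by
    intro i j
    have h1 : v i ⬝ᵥ ((Cᴴ * C) *ᵥ v j) = (C *ᵥ v i) ⬝ᵥ (C *ᵥ v j) := by
      rw [← Matrix.mulVec_mulVec, Matrix.dotProduct_mulVec,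
        Matrix.conjTranspose_eq_transpose_of_trivial, Matrix.vecMul_transpose]
    rw [← h1, hVmul j, dotProduct_smul, horth i j]
    by_cases hij : i = j
    · subst hij; simp
    · simp [hij]
  have hCv0 : ∀ i, μ i = 0 → C *ᵥ v i = 0 := by
    intro i h
    have h2 := hCdot i i
    rw [if_pos rfl, h] at h2
    exact dotProduct_self_eq_zero.1 h2
  set u : Fin n → (Fin m → ℝ) := fun i => (σ i)⁻¹ • (C *ᵥ v i) with hudef
  have hu0 : ∀ i, σ i = 0 → u i = 0 := by
    intro i h
    rw [hudef]
    simp only []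
    rw [hCv0 i ((hσzero i).1 h)]
    simp
  have hUcol : ∀ i, σ i • u i = C *ᵥ v i := by
    intro i
    by_cases h : σ i = 0
    · rw [h, hCv0 i ((hσzero i).1 h), hu0 i h]; simp
    · rw [hudef]
      simp only []
      rw [smul_smul, mul_inv_cancel₀ h, one_smul]
  have hudot : ∀ i j, u i ⬝ᵥ u j = if i = j then (if σ i = 0 then (0:ℝ) else 1) else 0 := by
    intro i j
    rw [hudef]
    simp only [smul_dotProduct, dotProduct_smul, smul_eq_mul]
    rw [hCdot i j]
    by_cases hij : i = j
    · subst hij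
      simp only [if_pos rfl]
      by_cases h : σ i = 0
      · simp [(hσzero i).1 h, h]
      · rw [if_neg h]
        have hμσ : μ i = σ i * σ i := by rw [← hσsq i]; ring
        rw [hμσ]
        field_simp
        simp
    · simp [hij]
  set U : Matrix (Fin m) (Fin n) ℝ := Matrix.of (fun x i => u i x) with hUdef
  set V : Matrix (Fin n) (Fin n) ℝ := Matrix.of (fun x i => v i x) with hVdef
  have hVtV : Vᵀ * V = 1 := by
    ext i j
    have h1 : (Vᵀ * V) i j = v i ⬝ᵥ v j := by
      simp [Matrix.mul_apply, dotProduct, hVdef]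
    rw [h1, horth i j, Matrix.one_apply]
  have hVVt : V * Vᵀ = 1 := mul_eq_one_comm.mp hVtV
  have hUtU : Uᵀ * U = Matrix.diagonal (fun i => if σ i = 0 then (0:ℝ) else 1) := by
    ext i j
    have h1 : (Uᵀ * U) i j = u i ⬝ᵥ u j := by
      simp [Matrix.mul_apply, dotProduct, hUdef]
    rw [h1, hudot i j, Matrix.diagonal_apply]
  have hUe : U * Matrix.diagonal (fun i => if σ i = 0 then (0:ℝ) else 1) = U := by
    ext x i
    rw [Matrix.mul_diagonal]
    by_cases h : σ i = 0
    · rw [if_pos h]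
      have : U x i = 0 := by
        rw [hUdef]
        simp only [Matrix.of_apply]
        rw [hu0 i h]
        rfl
      rw [this]
      ring
    · rw [if_neg h]; ring
  have hCV : C * V = U * Matrix.diagonal σ := by
    ext x i
    rw [Matrix.mul_diagonal]
    have h1 : (C * V) x i = (C *ᵥ v i) x := by
      simp [Matrix.mul_apply, Matrix.mulVec, dotProduct, hVdef]
    rw [h1, ← hUcol i]
    simp [hUdef, mul_comm]
  have hC : C = U * Matrix.diagonal σ * Vᵀ := by
    calc C = C * (V * Vᵀ) := by rw [hVVt, Matrix.mul_one]
      _ = (C * V) * Vᵀ := by rw [Matrix.mul_assoc]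
      _ = U * Matrix.diagonal σ * Vᵀ := by rw [hCV]
  have hrank : C.rank = (Finset.univ.filter (fun i => σ i ≠ 0)).card := by
    have h1 : C.rank = (Cᴴ * C).rank := (Matrix.rank_conjTranspose_mul_self C).symm
    rw [h1, hH.rank_eq_card_non_zero_eigs, Fintype.card_subtype]
    congr 1
    ext i
    simp [hσzero i]
    exact Iff.rfl
  exact ⟨U, V, hVtV, hVVt, hUtU, hUe, hC, hrank⟩

theorem stmt_7 {m n : ℕ} (C : Matrix (Fin m) (Fin n) ℝ)
    (lA lB : ℝ) (hA : 0 < lA) (hB : 0 < lB) (k : ℕ) (hk : C.rank ≤ k) :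
    IsLeast {v : ℝ | ∃ (A : Matrix (Fin m) (Fin k) ℝ) (B : Matrix (Fin k) (Fin n) ℝ),
        A * B = C ∧ v = lA / 2 * frobSq A + lB / 2 * frobSq B}
      (Real.sqrt (lA * lB) * nuclearNorm C) := by
  constructor
  · -- membership
    obtain ⟨U, V, hVtV, hVVt, hUtU, hUe, hC, hrank⟩ := svd_exists C
    set σ : Fin n → ℝ := singVals C with hσ
    have hσ0 : ∀ i, 0 ≤ σ i := fun i => Real.sqrt_nonneg _
    set e : Fin n → ℝ := fun i => if σ i = 0 then 0 else 1 with he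
    set s : Finset (Fin n) := Finset.univ.filter (fun i => σ i ≠ 0) with hs
    have hcard : s.card ≤ k := by rw [← hrank]; exact hk
    set g : {x // x ∈ s} → Fin k := fun x => Fin.castLE hcard (s.equivFin x) with hg
    have hginj : Function.Injective g := by
      intro a b hab
      have := Fin.castLE_injective hcard hab
      exact s.equivFin.injective this
    set N : Matrix (Fin n) (Fin k) ℝ :=
      Matrix.of (fun i p => if h : σ i ≠ 0 then (if p = g ⟨i, by simp [hs, h]⟩ then (1:ℝ) else 0) else 0) with hN
    have hNN : N * Nᵀ = Matrix.diagonal e := by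
      ext i j
      rw [Matrix.mul_apply, Matrix.diagonal_apply]
      by_cases hi : σ i = 0
      · simp [hN, hi, he]
      · by_cases hj : σ j = 0
        · have hij : i ≠ j := fun h => hi (by rw [h]; exact hj)
          simp only [hN, Matrix.of_apply, Matrix.transpose_apply, dif_neg (not_not_intro hj),
            mul_zero, Finset.sum_const_zero, if_neg hij]
        · by_cases hij : i = j
          · subst hij
            simp [hN, hi, he, Finset.sum_ite_eq']
          · have hgij : g ⟨i, by simp [hs, hi]⟩ ≠ g ⟨j, by simp [hs, hj]⟩ := by
              intro h
              exact hij (congrArg Subtype.val (hginj h))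
            simp only [hN, Matrix.of_apply, Matrix.transpose_apply, dif_pos hi, dif_pos hj, if_neg hij]
            rw [Finset.sum_eq_zero]
            intro p _
            by_cases h1 : p = g ⟨i, by simp [hs, hi]⟩
            · rw [if_pos h1, if_neg (by rw [h1]; exact hgij), mul_zero]
            · rw [if_neg h1, zero_mul]
    set Dh : Matrix (Fin n) (Fin n) ℝ := Matrix.diagonal (fun i => Real.sqrt (σ i)) with hDh
    have hDhe : Dh * Matrix.diagonal e * Dh = Matrix.diagonal σ := by
      rw [hDh, Matrix.diagonal_mul_diagonal, Matrix.diagonal_mul_diagonal]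
      rw [Matrix.diagonal_eq_diagonal_iff]
      intro i
      by_cases h : σ i = 0
      · simp [he, h]
      · simp only [he, if_neg h, mul_one]
        exact Real.mul_self_sqrt (hσ0 i)
    have hDhDh : Dh * Dh = Matrix.diagonal σ := by
      rw [hDh, Matrix.diagonal_mul_diagonal]
      rw [Matrix.diagonal_eq_diagonal_iff]
      intro i
      exact Real.mul_self_sqrt (hσ0 i)
    set γA : ℝ := Real.sqrt (Real.sqrt (lB / lA)) with hγA
    set γB : ℝ := Real.sqrt (Real.sqrt (lA / lB)) with hγB
    have hγAB : γA * γB = 1 := by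
      rw [hγA, hγB, ← Real.sqrt_mul (Real.sqrt_nonneg _), ← Real.sqrt_mul (by positivity)]
      have : lB / lA * (lA / lB) = 1 := by field_simp
      rw [this, Real.sqrt_one, Real.sqrt_one]
    refine ⟨γA • (U * Dh * N), γB • (Nᵀ * Dh * Vᵀ), ?_, ?_⟩
    · rw [Matrix.smul_mul, Matrix.mul_smul, smul_smul, hγAB, one_smul]
      have h1 : U * Dh * N * (Nᵀ * Dh * Vᵀ) = U * (Dh * Matrix.diagonal e * Dh) * Vᵀ := by
        rw [← hNN]
        simp only [Matrix.mul_assoc]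
      rw [h1, hDhe, ← hC]
    · have hNDN : (Nᵀ * (Matrix.diagonal σ * N)).trace = nuclearNorm C := by
        rw [Matrix.trace_mul_comm, Matrix.mul_assoc, hNN, Matrix.diagonal_mul_diagonal,
          Matrix.trace_diagonal]
        rw [show nuclearNorm C = ∑ i, σ i from rfl]
        apply Finset.sum_congr rfl
        intro i _
        by_cases h : σ i = 0 <;> simp [he, h]
      have hDht : Dhᵀ = Dh := by rw [hDh, Matrix.diagonal_transpose]
      have hfA : frobSq (γA • (U * Dh * N)) = γA^2 * nuclearNorm C := by
        rw [frobSq_smul, frobSq_eq_trace]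
        congr 1
        have h2 : (U * Dh * N)ᵀ * (U * Dh * N) = Nᵀ * (Matrix.diagonal σ * N) := by
          rw [Matrix.transpose_mul, Matrix.transpose_mul, hDht]
          simp only [Matrix.mul_assoc]
          congr 1
          rw [← Matrix.mul_assoc Uᵀ U, hUtU, ← Matrix.mul_assoc, ← Matrix.mul_assoc, hDhe]
        rw [h2, hNDN]
      have hfB : frobSq (γB • (Nᵀ * Dh * Vᵀ)) = γB^2 * nuclearNorm C := by
        rw [frobSq_smul, frobSq_eq_trace']
        congr 1
        have h2 : (Nᵀ * Dh * Vᵀ) * (Nᵀ * Dh * Vᵀ)ᵀ = Nᵀ * (Matrix.diagonal σ * N) := by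
          rw [Matrix.transpose_mul, Matrix.transpose_mul, Matrix.transpose_transpose,
            Matrix.transpose_transpose, hDht]
          simp only [Matrix.mul_assoc]
          congr 1
          rw [← Matrix.mul_assoc Vᵀ V, hVtV, Matrix.one_mul, ← Matrix.mul_assoc, hDhDh]
        rw [h2, hNDN]
      rw [hfA, hfB]
      have hγA2 : γA^2 = Real.sqrt (lB / lA) := Real.sq_sqrt (Real.sqrt_nonneg _)
      have hγB2 : γB^2 = Real.sqrt (lA / lB) := Real.sq_sqrt (Real.sqrt_nonneg _)
      rw [hγA2, hγB2]
      obtain ⟨a, ha0, rfl⟩ : ∃ a, 0 < a ∧ a^2 = lA :=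
        ⟨Real.sqrt lA, Real.sqrt_pos.2 hA, Real.sq_sqrt hA.le⟩
      obtain ⟨b, hb0, rfl⟩ : ∃ b, 0 < b ∧ b^2 = lB :=
        ⟨Real.sqrt lB, Real.sqrt_pos.2 hB, Real.sq_sqrt hB.le⟩
      have h1 : Real.sqrt (a^2 * b^2) = a * b := by
        rw [show a^2 * b^2 = (a*b)^2 by ring, Real.sqrt_sq (by positivity)]
      have h2 : Real.sqrt (b^2 / a^2) = b / a := by
        rw [show b^2 / a^2 = (b/a)^2 by rw [div_pow], Real.sqrt_sq (by positivity)]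
      have h3 : Real.sqrt (a^2 / b^2) = a / b := by
        rw [show a^2 / b^2 = (a/b)^2 by rw [div_pow], Real.sqrt_sq (by positivity)]
      rw [h1, h2, h3]
      field_simp
      ring
  · -- lower bound
    rintro x ⟨A, B, hAB, rfl⟩
    obtain ⟨U, V, hVtV, hVVt, hUtU, hUe, hC, -⟩ := svd_exists C
    set σ : Fin n → ℝ := singVals C with hσ
    set e : Fin n → ℝ := fun i => if σ i = 0 then 0 else 1 with he
    have h1 : Uᵀ * C * V = Matrix.diagonal σ := by
      rw [hC]
      simp only [Matrix.mul_assoc]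
      rw [hVtV, Matrix.mul_one, ← Matrix.mul_assoc, hUtU, Matrix.diagonal_mul_diagonal,
        Matrix.diagonal_eq_diagonal_iff]
      intro i
      by_cases h : σ i = 0 <;> simp [he, h]
    have hnuc : nuclearNorm C = ((Aᵀ * U)ᵀ * (B * V)).trace := by
      rw [show (Aᵀ * U)ᵀ = Uᵀ * A from by rw [Matrix.transpose_mul, Matrix.transpose_transpose]]
      have h2 : Uᵀ * A * (B * V) = Uᵀ * C * V := by
        rw [← hAB]; simp only [Matrix.mul_assoc]
      rw [h2, h1, Matrix.trace_diagonal]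
      rfl
    have hfBV : frobSq (B * V) = frobSq B := by
      rw [frobSq_eq_trace, frobSq_eq_trace B]
      rw [Matrix.transpose_mul, Matrix.mul_assoc, Matrix.trace_mul_comm]
      simp only [Matrix.mul_assoc]
      rw [hVVt, Matrix.mul_one, Matrix.trace_mul_comm]
    have hfAU : frobSq (Aᵀ * U) ≤ frobSq A := by
      rw [frobSq_eq_trace, frobSq_eq_trace' A]
      rw [Matrix.transpose_mul, Matrix.transpose_transpose, Matrix.trace_mul_comm]
      have h3 : Aᵀ * U * (Uᵀ * A) = (Aᵀ * (U * Uᵀ)) * A := by simp only [Matrix.mul_assoc]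
      have h4 : (A * Aᵀ) * (U * Uᵀ) = A * (Aᵀ * (U * Uᵀ)) := by simp only [Matrix.mul_assoc]
      have h5 : (Aᵀ * U * (Uᵀ * A)).trace = ((A * Aᵀ) * (U * Uᵀ)).trace := by
        rw [h3, h4, Matrix.trace_mul_comm]
      rw [h5]
      have hPt : (U * Uᵀ)ᵀ = U * Uᵀ := by
        rw [Matrix.transpose_mul, Matrix.transpose_transpose]
      have hP2 : (U * Uᵀ) * (U * Uᵀ) = U * Uᵀ := by
        calc (U * Uᵀ) * (U * Uᵀ) = U * (Uᵀ * U) * Uᵀ := by simp only [Matrix.mul_assoc]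
          _ = U * Matrix.diagonal e * Uᵀ := by rw [hUtU]
          _ = U * Uᵀ := by rw [hUe]
      have hX : (A * Aᵀ).PosSemidef := by
        have := Matrix.posSemidef_self_mul_conjTranspose A
        simpa [Matrix.conjTranspose_eq_transpose_of_trivial] using this
      exact trace_mul_proj_le hX hPt hP2
    have hkey : nuclearNorm C ≤ Real.sqrt (frobSq A) * Real.sqrt (frobSq B) := by
      calc nuclearNorm C = ((Aᵀ * U)ᵀ * (B * V)).trace := hnuc
        _ ≤ Real.sqrt (frobSq (Aᵀ * U)) * Real.sqrt (frobSq (B * V)) := trace_transpose_mul_le _ _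
        _ ≤ Real.sqrt (frobSq A) * Real.sqrt (frobSq B) := by
            rw [hfBV]
            apply mul_le_mul_of_nonneg_right _ (Real.sqrt_nonneg _)
            exact Real.sqrt_le_sqrt hfAU
    set a : ℝ := Real.sqrt (frobSq A) with hadef
    set b : ℝ := Real.sqrt (frobSq B) with hbdef
    have ha2 : a^2 = frobSq A := Real.sq_sqrt (frobSq_nonneg A)
    have hb2 : b^2 = frobSq B := Real.sq_sqrt (frobSq_nonneg B)
    have ha0 : 0 ≤ a := Real.sqrt_nonneg _
    have hb0 : 0 ≤ b := Real.sqrt_nonneg _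
    have hsab : Real.sqrt (lA * lB) = Real.sqrt lA * Real.sqrt lB := Real.sqrt_mul hA.le _
    have hsA : Real.sqrt lA ^ 2 = lA := Real.sq_sqrt hA.le
    have hsB : Real.sqrt lB ^ 2 = lB := Real.sq_sqrt hB.le
    have step1 : Real.sqrt (lA * lB) * nuclearNorm C ≤ Real.sqrt (lA * lB) * (a * b) :=
      mul_le_mul_of_nonneg_left hkey (Real.sqrt_nonneg _)
    have step2 : Real.sqrt (lA * lB) * (a * b) ≤ lA / 2 * frobSq A + lB / 2 * frobSq B := by
      rw [hsab, ← ha2, ← hb2]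
      nlinarith [sq_nonneg (Real.sqrt lA * a - Real.sqrt lB * b), hsA, hsB]
    linarith
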